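/- arXiv:2307.00888 — 4 statements merged into one kernel-verified Lean document; each statement's English description precedes it below -/
import Mathlib

section
/- Let (γ_k)_{k≥1} be positive reals with γ_k → ∞. Let h : [0,∞) × ℕ → (0,∞) be bounded. Let (p_ξ)_{ξ∈ℕ} be a probability mass function on ℕ with p_1 = 0. For each k and each (x,y) ∈ [0,∞) × ℕ, let v_k(·; x,y) be a probability mass function on ℕ with v_k(1; x,y) < 1, and assume: (i) sup_{(x,y)} |γ_k (1 − v_k(1; x,y)) − h(x,y)| → 0 as k → ∞; (ii) for every ξ ∈ ℕ with ξ ≠ 1, sup_{(x,y)} | v_k(ξ; x,y)/(1 − v_k(1; x,y)) − p_ξ | → 0 as k → ∞. Define Φ_{k,2}(λ; x,y) = γ_k [ e^{-λ} − Σ_{j=0}^∞ v_k(j; x,y) e^{-λ j} ] and φ₂(λ) = Σ_{ξ=0}^∞ (e^{-λ(ξ−1)} − 1) p_ξ. Then for every Λ > 0, sup { | e^{λ} Φ_{k,2}(λ; x,y) + h(x,y) φ₂(λ) | : (x,y) ∈ [0,∞) × ℕ, λ ∈ [0,Λ] } → 0 as k → ∞. -/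
open Filter

lemma aux_fbound {Λ l : ℝ} (hl0 : 0 ≤ l) (hlΛ : l ≤ Λ) (j : ℕ) :
    |1 - Real.exp (-l * ((j:ℝ) - 1))| ≤ Real.exp Λ := by
  have hE1 : (1:ℝ) ≤ Real.exp Λ := Real.one_le_exp (le_trans hl0 hlΛ)
  have h1 : Real.exp (-l * ((j:ℝ) - 1)) ≤ Real.exp Λ := by
    apply Real.exp_le_exp.2
    rcases Nat.eq_zero_or_pos j with hj | hj
    · subst hj; push_cast; nlinarith
    · have : (1:ℝ) ≤ (j:ℝ) := by exact_mod_cast hj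
      nlinarith
  have h2 : 0 < Real.exp (-l * ((j:ℝ) - 1)) := Real.exp_pos _
  rw [abs_le]; constructor <;> nlinarith

lemma aux_f01 {l : ℝ} (hl0 : 0 ≤ l) {j : ℕ} (hj : 1 ≤ j) :
    0 ≤ 1 - Real.exp (-l * ((j:ℝ) - 1)) ∧ 1 - Real.exp (-l * ((j:ℝ) - 1)) ≤ 1 := by
  have h1 : Real.exp (-l * ((j:ℝ) - 1)) ≤ 1 := by
    rw [Real.exp_le_one_iff]
    have : (1:ℝ) ≤ (j:ℝ) := by exact_mod_cast hj
    nlinarith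
  have h2 : 0 < Real.exp (-l * ((j:ℝ) - 1)) := Real.exp_pos _
  constructor <;> linarith

lemma aux_summable {l : ℝ} (hl0 : 0 ≤ l) {u : ℕ → ℝ} (hu0 : ∀ j, 0 ≤ u j) (hu : Summable u) :
    Summable (fun j : ℕ => u j * Real.exp (-l * ((j:ℝ) - 1))) := by
  apply Summable.of_nonneg_of_le (fun j => mul_nonneg (hu0 j) (Real.exp_pos _).le)
    (fun j => ?_) (hu.mul_right (Real.exp l))
  exact mul_le_mul_of_nonneg_left (Real.exp_le_exp.2 (by nlinarith [Nat.cast_nonneg (α := ℝ) j])) (hu0 j)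

lemma aux_abs_tsum {f : ℕ → ℝ} (hf : Summable (fun j => |f j|)) : |∑' j, f j| ≤ ∑' j, |f j| := by
  simpa [Real.norm_eq_abs] using norm_tsum_le_tsum_norm (f := f) (by simpa [Real.norm_eq_abs] using hf)

set_option maxHeartbeats 1000000 in
lemma aux_key (Λ : ℝ) {l : ℝ} (hl0 : 0 ≤ l) (hlΛ : l ≤ Λ)
    (p : ℕ → ℝ) (hp0 : ∀ j, 0 ≤ p j) (hpsum : HasSum p 1) (hp1 : p 1 = 0)
    (w : ℕ → ℝ) (hw0 : ∀ j, 0 ≤ w j) (hwsum : HasSum w 1) (hw1 : w 1 < 1)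
    (g H : ℝ) (hH : 0 < H)
    (N : ℕ) (ε₁ δ' θ : ℝ) (hδ' : 0 ≤ δ')
    (h1 : |g * (1 - w 1) - H| < ε₁)
    (h2 : ∀ j ≤ N, j ≠ 1 → |w j / (1 - w 1) - p j| < δ')
    (htail : ∑' j : ℕ, p (j + (N + 1)) ≤ θ) :
    |Real.exp l * (g * (Real.exp (-l) - ∑' j : ℕ, w j * Real.exp (-l * (j:ℝ))))
      + H * (∑' ξ : ℕ, (Real.exp (-l * ((ξ:ℝ) - 1)) - 1) * p ξ)|
      ≤ ε₁ * Real.exp Λ + H * (((N:ℝ) + 1) * δ' * (Real.exp Λ + 1) + 2 * θ) := by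
  set E := Real.exp Λ with hEdef
  have hE1 : (1:ℝ) ≤ E := Real.one_le_exp (le_trans hl0 hlΛ)
  set ff : ℕ → ℝ := fun j => 1 - Real.exp (-l * ((j:ℝ) - 1)) with hffdef
  have hff1 : ff 1 = 0 := by simp [hffdef]
  have hffE : ∀ j, |ff j| ≤ E := fun j => aux_fbound hl0 hlΛ j
  set a := 1 - w 1 with hadef
  have ha0 : 0 < a := by simp only [hadef]; linarith
  set q : ℕ → ℝ := fun j => if j = 1 then 0 else w j / a with hqdef
  have hq0 : ∀ j, 0 ≤ q j := by
    intro j; by_cases hj : j = 1 <;> simp [hqdef, hj]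
    exact div_nonneg (hw0 j) ha0.le
  have hqsum : HasSum q 1 := by
    have hone : HasSum (fun j : ℕ => if j = 1 then w 1 else 0) (w 1) := hasSum_ite_eq 1 (w 1)
    have h2' := (hwsum.sub hone).div_const a
    have hqe : q = fun j => (w j - if j = 1 then w 1 else 0) / a := by
      funext j; by_cases hj : j = 1 <;> simp [hqdef, hj]
    rw [hqe]
    simpa [← hadef, div_self ha0.ne'] using h2'
  -- summability
  have hwe : Summable (fun j : ℕ => w j * Real.exp (-l * ((j:ℝ) - 1))) :=
    aux_summable hl0 hw0 hwsum.summable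
  have hpe : Summable (fun j : ℕ => p j * Real.exp (-l * ((j:ℝ) - 1))) :=
    aux_summable hl0 hp0 hpsum.summable
  have hqe : Summable (fun j : ℕ => q j * Real.exp (-l * ((j:ℝ) - 1))) :=
    aux_summable hl0 hq0 hqsum.summable
  have hwf : Summable (fun j : ℕ => w j * ff j) :=
    (hwsum.summable.sub hwe).congr fun j => by simp only [hffdef]; ring
  have hpf : Summable (fun j : ℕ => p j * ff j) :=
    (hpsum.summable.sub hpe).congr fun j => by simp only [hffdef]; ring
  have hqf : Summable (fun j : ℕ => q j * ff j) :=
    (hqsum.summable.sub hqe).congr fun j => by simp only [hffdef]; ring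
  -- identity A
  have hexp : ∀ j : ℕ, Real.exp l * (w j * Real.exp (-l * (j:ℝ))) = w j * Real.exp (-l * ((j:ℝ) - 1)) := by
    intro j
    have h : l + -l * (j:ℝ) = -l * ((j:ℝ) - 1) := by ring
    rw [mul_left_comm, ← Real.exp_add, h]
  have hwesum : Summable (fun j : ℕ => w j * Real.exp (-l * (j:ℝ))) := by
    apply Summable.of_nonneg_of_le (fun j => mul_nonneg (hw0 j) (Real.exp_pos _).le)
      (fun j => ?_) hwsum.summable
    calc w j * Real.exp (-l * (j:ℝ)) ≤ w j * 1 := by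
          refine mul_le_mul_of_nonneg_left ?_ (hw0 j)
          rw [Real.exp_le_one_iff]
          have : (0:ℝ) ≤ (j:ℝ) := Nat.cast_nonneg j
          nlinarith
      _ = w j := mul_one _
  have hT : Real.exp l * ∑' j : ℕ, w j * Real.exp (-l * (j:ℝ))
      = ∑' j : ℕ, w j * Real.exp (-l * ((j:ℝ) - 1)) := by
    rw [← tsum_mul_left]; exact tsum_congr hexp
  have hA : ∑' j : ℕ, w j * ff j = 1 - ∑' j : ℕ, w j * Real.exp (-l * ((j:ℝ) - 1)) := by
    calc ∑' j : ℕ, w j * ff j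
        = ∑' j : ℕ, (w j - w j * Real.exp (-l * ((j:ℝ) - 1))) :=
          tsum_congr fun j => by simp only [hffdef]; ring
      _ = (∑' j : ℕ, w j) - ∑' j : ℕ, w j * Real.exp (-l * ((j:ℝ) - 1)) :=
          Summable.tsum_sub hwsum.summable hwe
      _ = 1 - _ := by rw [hwsum.tsum_eq]
  have hexp0 : Real.exp l * Real.exp (-l) = 1 := by rw [← Real.exp_add]; simp
  have expA : Real.exp l * (g * (Real.exp (-l) - ∑' j : ℕ, w j * Real.exp (-l * (j:ℝ))))
      = g * ∑' j : ℕ, w j * ff j := by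
    calc Real.exp l * (g * (Real.exp (-l) - ∑' j : ℕ, w j * Real.exp (-l * (j:ℝ))))
        = g * (Real.exp l * Real.exp (-l)
            - Real.exp l * ∑' j : ℕ, w j * Real.exp (-l * (j:ℝ))) := by ring
      _ = g * (1 - ∑' j : ℕ, w j * Real.exp (-l * ((j:ℝ) - 1))) := by rw [hexp0, hT]
      _ = g * ∑' j : ℕ, w j * ff j := by rw [hA]
  -- identity B
  have expB : ∑' ξ : ℕ, (Real.exp (-l * ((ξ:ℝ) - 1)) - 1) * p ξ = -∑' j : ℕ, p j * ff j := by
    rw [← tsum_neg]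
    exact tsum_congr fun j => by simp only [hffdef]; ring
  -- A via q
  have hAq : ∑' j : ℕ, w j * ff j = a * ∑' j : ℕ, q j * ff j := by
    rw [← tsum_mul_left]
    refine tsum_congr fun j => ?_
    by_cases hj : j = 1
    · subst hj; simp [hff1]
    · simp only [hqdef, if_neg hj]
      field_simp
  set S := ∑' j : ℕ, q j * ff j with hSdef
  set B := ∑' j : ℕ, p j * ff j with hBdef
  -- |S| ≤ E
  have hSle : |S| ≤ E := by
    calc |S| ≤ ∑' j : ℕ, |q j * ff j| := aux_abs_tsum hqf.abs
      _ ≤ ∑' j : ℕ, q j * E := by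
          refine Summable.tsum_le_tsum (fun j => ?_) hqf.abs (hqsum.summable.mul_right E)
          rw [abs_mul, abs_of_nonneg (hq0 j)]
          exact mul_le_mul_of_nonneg_left (hffE j) (hq0 j)
      _ = E := by rw [tsum_mul_right, hqsum.tsum_eq, one_mul]
  -- |S - B| bound
  have hD : Summable (fun j : ℕ => (q j - p j) * ff j) :=
    (hqf.sub hpf).congr fun j => by ring
  have hSB : S - B = ∑' j : ℕ, (q j - p j) * ff j := by
    rw [hSdef, hBdef, ← Summable.tsum_sub hqf hpf]
    exact tsum_congr fun j => by ring
  -- split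
  have hsplitD := Summable.sum_add_tsum_nat_add (f := fun j : ℕ => (q j - p j) * ff j) (N + 1) hD
  have hsplitq := Summable.sum_add_tsum_nat_add (f := q) (N + 1) hqsum.summable
  have hsplitp := Summable.sum_add_tsum_nat_add (f := p) (N + 1) hpsum.summable
  -- head bound
  have hhead : |∑ j ∈ Finset.range (N + 1), (q j - p j) * ff j| ≤ ((N:ℝ) + 1) * (δ' * E) := by
    calc |∑ j ∈ Finset.range (N + 1), (q j - p j) * ff j|
        ≤ ∑ j ∈ Finset.range (N + 1), |(q j - p j) * ff j| := Finset.abs_sum_le_sum_abs _ _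
      _ ≤ ∑ _j ∈ Finset.range (N + 1), δ' * E := by
          refine Finset.sum_le_sum fun j hj => ?_
          rw [Finset.mem_range] at hj
          by_cases hj1 : j = 1
          · subst hj1; rw [hff1]
            simp only [mul_zero, abs_zero]
            positivity
          · rw [abs_mul]
            have hqp : |q j - p j| ≤ δ' := by
              simp only [hqdef, if_neg hj1]
              exact (h2 j (by omega) hj1).le
            exact mul_le_mul hqp (hffE j) (abs_nonneg _) hδ'
      _ = ((N:ℝ) + 1) * (δ' * E) := by
          rw [Finset.sum_const, Finset.card_range]; push_cast; ring
  -- tail bounds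
  have htailq_sum : Summable (fun i : ℕ => q (i + (N + 1))) :=
    (summable_nat_add_iff (N + 1)).2 hqsum.summable
  have htailp_sum : Summable (fun i : ℕ => p (i + (N + 1))) :=
    (summable_nat_add_iff (N + 1)).2 hpsum.summable
  have htailD : |∑' i : ℕ, (q (i + (N + 1)) - p (i + (N + 1))) * ff (i + (N + 1))|
      ≤ (∑' i : ℕ, q (i + (N + 1))) + ∑' i : ℕ, p (i + (N + 1)) := by
    have hDt : Summable (fun i : ℕ => (q (i + (N + 1)) - p (i + (N + 1))) * ff (i + (N + 1))) :=
      (summable_nat_add_iff (N + 1)).2 hD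
    calc |∑' i : ℕ, (q (i + (N + 1)) - p (i + (N + 1))) * ff (i + (N + 1))|
        ≤ ∑' i : ℕ, |(q (i + (N + 1)) - p (i + (N + 1))) * ff (i + (N + 1))| :=
          aux_abs_tsum hDt.abs
      _ ≤ ∑' i : ℕ, (q (i + (N + 1)) + p (i + (N + 1))) := by
          refine Summable.tsum_le_tsum (fun i => ?_) hDt.abs (htailq_sum.add htailp_sum)
          rw [abs_mul]
          have h01 := aux_f01 hl0 (j := i + (N + 1)) (by omega)
          have hfle1 : |ff (i + (N + 1))| ≤ 1 := by
            simp only [hffdef]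
            rw [abs_le]
            exact ⟨by linarith [h01.1], h01.2⟩
          have habs : |q (i + (N + 1)) - p (i + (N + 1))| ≤ q (i + (N + 1)) + p (i + (N + 1)) := by
            rw [abs_le]
            constructor <;> linarith [hq0 (i + (N + 1)), hp0 (i + (N + 1))]
          calc |q (i + (N + 1)) - p (i + (N + 1))| * |ff (i + (N + 1))|
              ≤ |q (i + (N + 1)) - p (i + (N + 1))| * 1 :=
                mul_le_mul_of_nonneg_left hfle1 (abs_nonneg _)
            _ ≤ q (i + (N + 1)) + p (i + (N + 1)) := by rw [mul_one]; exact habs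
      _ = (∑' i : ℕ, q (i + (N + 1))) + ∑' i : ℕ, p (i + (N + 1)) :=
          Summable.tsum_add htailq_sum htailp_sum
  -- tail of q bound
  have hqhead : ∑ j ∈ Finset.range (N + 1), p j - ((N:ℝ) + 1) * δ'
      ≤ ∑ j ∈ Finset.range (N + 1), q j := by
    have : ∀ j ∈ Finset.range (N + 1), p j - δ' ≤ q j := by
      intro j hj
      rw [Finset.mem_range] at hj
      by_cases hj1 : j = 1
      · subst hj1; simp [hqdef, hp1]; linarith
      · have := h2 j (by omega) hj1
        rw [abs_lt] at this
        simp only [hqdef, if_neg hj1]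
        linarith [this.1]
    calc ∑ j ∈ Finset.range (N + 1), p j - ((N:ℝ) + 1) * δ'
        = ∑ j ∈ Finset.range (N + 1), (p j - δ') := by
          rw [Finset.sum_sub_distrib, Finset.sum_const, Finset.card_range]; push_cast; ring
      _ ≤ ∑ j ∈ Finset.range (N + 1), q j := Finset.sum_le_sum this
  have htailq : ∑' i : ℕ, q (i + (N + 1)) ≤ θ + ((N:ℝ) + 1) * δ' := by
    have e1 : ∑' i : ℕ, q (i + (N + 1)) = 1 - ∑ j ∈ Finset.range (N + 1), q j := by
      rw [← hqsum.tsum_eq, ← hsplitq]; ring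
    have e2 : ∑' i : ℕ, p (i + (N + 1)) = 1 - ∑ j ∈ Finset.range (N + 1), p j := by
      rw [← hpsum.tsum_eq, ← hsplitp]; ring
    rw [e1]
    rw [e2] at htail
    linarith
  -- combine |S - B|
  have hSBle : |S - B| ≤ ((N:ℝ) + 1) * δ' * (E + 1) + 2 * θ := by
    rw [hSB, ← hsplitD]
    calc |∑ j ∈ Finset.range (N + 1), (q j - p j) * ff j
            + ∑' i : ℕ, (q (i + (N + 1)) - p (i + (N + 1))) * ff (i + (N + 1))|
        ≤ |∑ j ∈ Finset.range (N + 1), (q j - p j) * ff j|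
            + |∑' i : ℕ, (q (i + (N + 1)) - p (i + (N + 1))) * ff (i + (N + 1))| := abs_add_le _ _
      _ ≤ ((N:ℝ) + 1) * (δ' * E) + ((θ + ((N:ℝ) + 1) * δ') + θ) := by
          refine add_le_add hhead (le_trans htailD (add_le_add htailq htail))
      _ = ((N:ℝ) + 1) * δ' * (E + 1) + 2 * θ := by ring
  -- final
  have hε₁ : 0 ≤ ε₁ := le_of_lt (lt_of_le_of_lt (abs_nonneg _) h1)
  rw [expA, expB, hAq]
  have key : g * (a * S) + H * -B = (g * a - H) * S + H * (S - B) := by ring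
  rw [key]
  calc |(g * a - H) * S + H * (S - B)|
      ≤ |(g * a - H) * S| + |H * (S - B)| := abs_add_le _ _
    _ = |g * a - H| * |S| + H * |S - B| := by
        rw [abs_mul, abs_mul, abs_of_pos hH]
    _ ≤ ε₁ * E + H * (((N:ℝ) + 1) * δ' * (E + 1) + 2 * θ) := by
        refine add_le_add ?_ (mul_le_mul_of_nonneg_left hSBle hH.le)
        exact mul_le_mul h1.le hSle (abs_nonneg _) hε₁
/-- Proposition 2.6 of the paper: `e^{λ}Φ_{k,2}(λ; x,y)` converges to `−h(x,y)φ₂(λ)`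
uniformly in `(x,y) ∈ [0,∞) × ℕ` and `λ` in compact intervals, under
Conditions (2.1.2)–(2.1.3). -/
theorem stmt2
    (γ : ℕ → ℝ) (hγpos : ∀ k, 0 < γ k) (hγ : Tendsto γ atTop atTop)
    (h : ℝ → ℕ → ℝ) (hpos : ∀ x ≥ (0:ℝ), ∀ y : ℕ, 0 < h x y)
    (hbdd : ∃ C : ℝ, ∀ x ≥ (0:ℝ), ∀ y : ℕ, h x y ≤ C)
    (p : ℕ → ℝ) (hp0 : ∀ ξ, 0 ≤ p ξ) (hpsum : HasSum p 1) (hp1 : p 1 = 0)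
    (v : ℕ → ℝ → ℕ → ℕ → ℝ)
    (hv0 : ∀ k, ∀ x ≥ (0:ℝ), ∀ y ξ : ℕ, 0 ≤ v k x y ξ)
    (hvsum : ∀ k, ∀ x ≥ (0:ℝ), ∀ y : ℕ, HasSum (v k x y) 1)
    (hv1 : ∀ k, ∀ x ≥ (0:ℝ), ∀ y : ℕ, v k x y 1 < 1)
    (hcond1 : ∀ ε > (0:ℝ), ∃ K : ℕ, ∀ k ≥ K, ∀ x ≥ (0:ℝ), ∀ y : ℕ,
      |γ k * (1 - v k x y 1) - h x y| < ε)
    (hcond2 : ∀ ξ : ℕ, ξ ≠ 1 → ∀ ε > (0:ℝ), ∃ K : ℕ, ∀ k ≥ K, ∀ x ≥ (0:ℝ), ∀ y : ℕ,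
      |v k x y ξ / (1 - v k x y 1) - p ξ| < ε) :
    ∀ Λ > (0:ℝ), ∀ ε > (0:ℝ), ∃ K : ℕ, ∀ k ≥ K, ∀ x ≥ (0:ℝ), ∀ y : ℕ,
      ∀ l ∈ Set.Icc (0:ℝ) Λ,
      |Real.exp l * (γ k * (Real.exp (-l) - ∑' j : ℕ, v k x y j * Real.exp (-l * (j:ℝ))))
        + h x y * (∑' ξ : ℕ, (Real.exp (-l * ((ξ:ℝ) - 1)) - 1) * p ξ)| < ε := by
  intro Λ hΛ ε hε
  set E := Real.exp Λ with hEdef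
  have hE1 : (1:ℝ) ≤ E := Real.one_le_exp hΛ.le
  have hE0 : (0:ℝ) < E := lt_of_lt_of_le one_pos hE1
  obtain ⟨C, hC⟩ := hbdd
  set C' : ℝ := max C 1 with hC'def
  have hC'pos : (0:ℝ) < C' := lt_of_lt_of_le one_pos (le_max_right _ _)
  have hC' : ∀ x ≥ (0:ℝ), ∀ y : ℕ, h x y ≤ C' := fun x hx y =>
    (hC x hx y).trans (le_max_left _ _)
  set θ : ℝ := ε / (8 * C') with hθdef
  have hθpos : 0 < θ := by positivity
  -- find N with tail of p ≤ θ
  have htt := Metric.tendsto_atTop.1 (tendsto_sum_nat_add p) θ hθpos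
  obtain ⟨N₀, hN₀⟩ := htt
  set N : ℕ := max N₀ 1 with hNdef
  have htailp : ∑' j : ℕ, p (j + (N + 1)) ≤ θ := by
    have := hN₀ (N + 1) (by omega)
    rw [Real.dist_eq, sub_zero] at this
    exact (le_abs_self _).trans this.le
  set δ' : ℝ := ε / (8 * C' * ((N:ℝ) + 1) * (E + 1)) with hδ'def
  have hNpos : (0:ℝ) < (N:ℝ) + 1 := by positivity
  have hδ'pos : 0 < δ' := by positivity
  set ε₁ : ℝ := ε / (8 * E) with hε₁def
  have hε₁pos : 0 < ε₁ := by positivity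
  obtain ⟨K₁, hK₁⟩ := hcond1 ε₁ hε₁pos
  have hK2' : ∀ j : ℕ, ∃ K : ℕ, ∀ k ≥ K, ∀ x ≥ (0:ℝ), ∀ y : ℕ, j ≠ 1 →
      |v k x y j / (1 - v k x y 1) - p j| < δ' := by
    intro j
    by_cases hj : j = 1
    · exact ⟨0, fun k _ x _ y hj' => absurd hj hj'⟩
    · obtain ⟨K, hK⟩ := hcond2 j hj δ' hδ'pos
      exact ⟨K, fun k hk x hx y _ => hK k hk x hx y⟩
  choose K2 hK2 using hK2'
  refine ⟨max K₁ ((Finset.range (N + 1)).sup K2), fun k hk x hx y l hl => ?_⟩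
  have hkK₁ : k ≥ K₁ := le_trans (le_max_left _ _) hk
  have hkK2 : ∀ j ≤ N, k ≥ K2 j := fun j hj =>
    le_trans (le_trans (Finset.le_sup (Finset.mem_range.2 (by omega))) (le_max_right _ _)) hk
  obtain ⟨hl0, hlΛ⟩ := hl
  have hb := aux_key Λ hl0 hlΛ p hp0 hpsum hp1 (v k x y) (hv0 k x hx y) (hvsum k x hx y)
    (hv1 k x hx y) (γ k) (h x y) (hpos x hx y) N ε₁ δ' θ hδ'pos.le
    (hK₁ k hkK₁ x hx y)
    (fun j hj hj1 => hK2 j k (hkK2 j hj) x hx y hj1)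
    htailp
  refine lt_of_le_of_lt hb ?_
  have hB0 : 0 ≤ ((N:ℝ) + 1) * δ' * (E + 1) + 2 * θ := by positivity
  have hstep : h x y * (((N:ℝ) + 1) * δ' * (E + 1) + 2 * θ)
      ≤ C' * (((N:ℝ) + 1) * δ' * (E + 1) + 2 * θ) :=
    mul_le_mul_of_nonneg_right (hC' x hx y) hB0
  have e1 : ε₁ * E = ε / 8 := by
    rw [hε₁def]; field_simp
  have e2 : C' * (((N:ℝ) + 1) * δ' * (E + 1)) = ε / 8 := by
    rw [hδ'def]; field_simp
  have e3 : C' * (2 * θ) = ε / 4 := by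
    rw [hθdef]; field_simp; ring
  have : C' * (((N:ℝ) + 1) * δ' * (E + 1) + 2 * θ) = ε / 8 + ε / 4 := by
    rw [mul_add, e2, e3]
  linarith
end

section
/- Let f : [0,∞) × ℕ → ℝ be bounded and such that for each y ∈ ℕ the map x ↦ f(x,y) is twice continuously differentiable on [0,∞) with sup_{(x,y)} ( |f(x,y)| + |∂_x f(x,y)| + |∂²_{xx} f(x,y)| ) < ∞. Then there exists a doubly indexed family (f^{m,n})_{m,n ∈ ℕ} of functions from [0,∞) × ℕ to ℝ such that: each f^{m,n} is bounded, twice continuously differentiable in x with bounded first and second x-derivatives, and vanishes at infinity (for every ε > 0 there is R > 0 such that |f^{m,n}(x,y)| < ε whenever x + y > R); and for every bounded subset B of [0,∞) × ℕ, sup_{(x,y) ∈ B} ( |f^{m,n}(x,y) − f(x,y)| + |∂_x f^{m,n}(x,y) − ∂_x f(x,y)| + |∂²_{xx} f^{m,n}(x,y) − ∂²_{xx} f(x,y)| ) → 0 as m, n → ∞. -/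
set_option maxHeartbeats 1000000 in
/-- Lemma 2.9 of the paper: every `f ∈ C_b²(D)`, `D = [0,∞) × ℕ`, can be approximated by
a doubly indexed family `f^{m,n} ∈ C_0²(D)` together with its first and second
`x`-derivatives, uniformly on bounded subsets of `D`. -/
theorem stmt6 (f f₁ f₁₁ : ℝ → ℕ → ℝ)
    (hderiv1 : ∀ y : ℕ, ∀ x ∈ Set.Ici (0:ℝ),
      HasDerivWithinAt (fun x' => f x' y) (f₁ x y) (Set.Ici 0) x)
    (hderiv2 : ∀ y : ℕ, ∀ x ∈ Set.Ici (0:ℝ),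
      HasDerivWithinAt (fun x' => f₁ x' y) (f₁₁ x y) (Set.Ici 0) x)
    (hcont : ∀ y : ℕ, ContinuousOn (fun x => f₁₁ x y) (Set.Ici 0))
    (hbdd : ∃ C : ℝ, ∀ x ∈ Set.Ici (0:ℝ), ∀ y : ℕ,
      |f x y| + |f₁ x y| + |f₁₁ x y| ≤ C) :
    ∃ F F₁ F₁₁ : ℕ → ℕ → ℝ → ℕ → ℝ,
      (∀ m n : ℕ, ∀ y : ℕ, ∀ x ∈ Set.Ici (0:ℝ),
        HasDerivWithinAt (fun x' => F m n x' y) (F₁ m n x y) (Set.Ici 0) x ∧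
        HasDerivWithinAt (fun x' => F₁ m n x' y) (F₁₁ m n x y) (Set.Ici 0) x) ∧
      (∀ m n : ℕ, ∀ y : ℕ, ContinuousOn (fun x => F₁₁ m n x y) (Set.Ici 0)) ∧
      (∀ m n : ℕ, ∃ C : ℝ, ∀ x ∈ Set.Ici (0:ℝ), ∀ y : ℕ,
        |F m n x y| + |F₁ m n x y| + |F₁₁ m n x y| ≤ C) ∧
      (∀ m n : ℕ, ∀ ε > (0:ℝ), ∃ R > (0:ℝ), ∀ x ∈ Set.Ici (0:ℝ), ∀ y : ℕ,
        x + (y:ℝ) > R → |F m n x y| < ε) ∧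
      (∀ R > (0:ℝ), ∀ ε > (0:ℝ), ∃ N₀ : ℕ, ∀ m ≥ N₀, ∀ n ≥ N₀,
        ∀ x ∈ Set.Icc (0:ℝ) R, ∀ y : ℕ, (y:ℝ) ≤ R →
          |F m n x y - f x y| + |F₁ m n x y - f₁ x y| + |F₁₁ m n x y - f₁₁ x y| < ε) := by
  obtain ⟨C, hC⟩ := hbdd
  have hC0 : 0 ≤ C := le_trans (by positivity) (hC 0 (Set.mem_Ici.mpr le_rfl) 0)
  have hbf : ∀ x ∈ Set.Ici (0:ℝ), ∀ y, |f x y| ≤ C := by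
    intro x hx y
    have := hC x hx y
    have := abs_nonneg (f₁ x y); have := abs_nonneg (f₁₁ x y); linarith
  have hbf1 : ∀ x ∈ Set.Ici (0:ℝ), ∀ y, |f₁ x y| ≤ C := by
    intro x hx y
    have := hC x hx y
    have := abs_nonneg (f x y); have := abs_nonneg (f₁₁ x y); linarith
  have hbf11 : ∀ x ∈ Set.Ici (0:ℝ), ∀ y, |f₁₁ x y| ≤ C := by
    intro x hx y
    have := hC x hx y
    have := abs_nonneg (f x y); have := abs_nonneg (f₁ x y); linarith
  set c : ℕ → ℝ := fun m => (m : ℝ) + 1 with hc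
  have hc1 : ∀ m : ℕ, (1:ℝ) ≤ c m := fun m => le_add_of_nonneg_left (Nat.cast_nonneg m)
  have hcpos : ∀ m : ℕ, (0:ℝ) < c m := fun m => lt_of_lt_of_le one_pos (hc1 m)
  have habsdiv : ∀ m : ℕ, ∀ a : ℝ, |a / c m| ≤ |a| := by
    intro m a
    rw [abs_div, abs_of_pos (hcpos m)]
    exact div_le_self (abs_nonneg a) (hc1 m)
  have habsdivsq : ∀ m : ℕ, ∀ a : ℝ, |a / (c m)^2| ≤ |a| := by
    intro m a
    rw [abs_div, abs_of_pos (by positivity : (0:ℝ) < (c m)^2)]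
    have h1 : (1:ℝ) ≤ (c m)^2 := by nlinarith [hc1 m]
    exact div_le_self (abs_nonneg a) h1
  have hEle : ∀ m : ℕ, ∀ x : ℝ, 0 ≤ x → Real.exp (-x / c m) ≤ 1 := by
    intro m x hx
    apply Real.exp_le_one_iff.mpr
    rw [neg_div]
    exact neg_nonpos.mpr (by positivity)
  have hEmul : ∀ m : ℕ, ∀ x : ℝ, 0 ≤ x → ∀ a : ℝ, |Real.exp (-x / c m) * a| ≤ |a| := by
    intro m x hx a
    rw [abs_mul, abs_of_pos (Real.exp_pos _)]
    calc Real.exp (-x / c m) * |a| ≤ 1 * |a| :=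
          mul_le_mul_of_nonneg_right (hEle m x hx) (abs_nonneg _)
      _ = |a| := one_mul _
  refine ⟨fun m n x y => if y ≤ n then Real.exp (-x / c m) * f x y else 0,
    fun m n x y => if y ≤ n then Real.exp (-x / c m) * (f₁ x y - f x y / c m) else 0,
    fun m n x y => if y ≤ n then
      Real.exp (-x / c m) * (f₁₁ x y - 2 * f₁ x y / c m + f x y / (c m)^2) else 0,
    ?_, ?_, ?_, ?_, ?_⟩
  · -- derivatives
    intro m n y x hx
    by_cases h : y ≤ n
    · simp only [if_pos h]
      have hexp : ∀ z : ℝ, HasDerivAt (fun x' : ℝ => Real.exp (-x' / c m))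
          (Real.exp (-z / c m) * (-1 / c m)) z := by
        intro z
        have h1 : HasDerivAt (fun x' : ℝ => -x' / c m) (-1 / c m) z := by
          simpa using ((hasDerivAt_id z).neg.div_const (c m))
        exact h1.exp
      constructor
      · have hd := (hexp x).hasDerivWithinAt.mul (hderiv1 y x hx)
        refine hd.congr_deriv ?_
        ring
      · have hg : HasDerivWithinAt (fun x' => f₁ x' y - f x' y / c m)
            (f₁₁ x y - f₁ x y / c m) (Set.Ici 0) x :=
          (hderiv2 y x hx).sub ((hderiv1 y x hx).div_const (c m))
        have hd := (hexp x).hasDerivWithinAt.mul hg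
        refine hd.congr_deriv ?_
        ring
    · simp only [if_neg h]
      exact ⟨hasDerivWithinAt_const _ _ _, hasDerivWithinAt_const _ _ _⟩
  · -- continuity of second derivative
    intro m n y
    by_cases h : y ≤ n
    · simp only [if_pos h]
      have hf : ContinuousOn (fun x => f x y) (Set.Ici (0:ℝ)) :=
        fun x hx => ((hderiv1 y x hx).continuousWithinAt)
      have hf1 : ContinuousOn (fun x => f₁ x y) (Set.Ici (0:ℝ)) :=
        fun x hx => ((hderiv2 y x hx).continuousWithinAt)
      have he : ContinuousOn (fun x : ℝ => Real.exp (-x / c m)) (Set.Ici 0) :=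
        (Real.continuous_exp.comp ((continuous_neg.comp continuous_id).div_const _)).continuousOn
      apply he.mul
      apply ContinuousOn.add
      · apply ContinuousOn.sub (hcont y)
        exact (continuousOn_const.mul hf1).div_const _
      · exact hf.div_const _
    · simp only [if_neg h]
      exact continuousOn_const
  · -- boundedness
    intro m n
    refine ⟨7 * C, fun x hx y => ?_⟩
    have hx0 : (0:ℝ) ≤ x := hx
    by_cases h : y ≤ n
    · simp only [if_pos h]
      have h1 : |Real.exp (-x / c m) * f x y| ≤ C :=
        le_trans (hEmul m x hx0 _) (hbf x hx y)
      have h2 : |Real.exp (-x / c m) * (f₁ x y - f x y / c m)| ≤ 2 * C := by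
        refine le_trans (hEmul m x hx0 _) ?_
        refine le_trans (abs_sub _ _) ?_
        have := habsdiv m (f x y)
        have := hbf x hx y
        have := hbf1 x hx y
        linarith
      have h3 : |Real.exp (-x / c m) * (f₁₁ x y - 2 * f₁ x y / c m + f x y / (c m)^2)| ≤ 4 * C := by
        refine le_trans (hEmul m x hx0 _) ?_
        refine le_trans (abs_add_le _ _) ?_
        have ha := abs_sub (f₁₁ x y) (2 * f₁ x y / c m)
        have hb := habsdiv m (2 * f₁ x y)
        have hb' : |2 * f₁ x y| = 2 * |f₁ x y| := by
          rw [abs_mul, abs_two]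
        have hcsq := habsdivsq m (f x y)
        have := hbf x hx y
        have := hbf1 x hx y
        have := hbf11 x hx y
        linarith
      linarith
    · simp only [if_neg h, abs_zero]
      linarith
  · -- vanishing at infinity
    intro m n ε hε
    set L : ℝ := |Real.log ((C + 1) / ε)| with hL
    refine ⟨(n : ℝ) + c m * L + 1, by positivity, ?_⟩
    intro x hx y hxy
    by_cases h : y ≤ n
    · simp only [if_pos h]
      have hx0 : (0:ℝ) ≤ x := hx
      have hyn : (y:ℝ) ≤ n := Nat.cast_le.mpr h
      have hxgt : x > c m * L + 1 := by linarith
      have hlog : Real.log ((C + 1) / ε) * c m < x := by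
        have h1 : Real.log ((C + 1) / ε) ≤ L := le_abs_self _
        have h2 : Real.log ((C + 1) / ε) * c m ≤ L * c m :=
          mul_le_mul_of_nonneg_right h1 (le_of_lt (hcpos m))
        calc Real.log ((C + 1) / ε) * c m ≤ L * c m := h2
          _ = c m * L := mul_comm _ _
          _ < c m * L + 1 := lt_add_one _
          _ < x := hxgt
      have hElt : Real.exp (-x / c m) < ε / (C + 1) := by
        have h1 : -x / c m < Real.log (ε / (C + 1)) := by
          rw [show ε / (C + 1) = ((C + 1) / ε)⁻¹ from (inv_div _ _).symm]
          rw [Real.log_inv]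
          rw [neg_div, neg_lt_neg_iff]
          exact (lt_div_iff₀ (hcpos m)).mpr hlog
        calc Real.exp (-x / c m) < Real.exp (Real.log (ε / (C + 1))) := Real.exp_lt_exp.mpr h1
          _ = ε / (C + 1) := Real.exp_log (by positivity)
      calc |Real.exp (-x / c m) * f x y| ≤ Real.exp (-x / c m) * C := by
            rw [abs_mul, abs_of_pos (Real.exp_pos _)]
            exact mul_le_mul_of_nonneg_left (hbf x hx y) (le_of_lt (Real.exp_pos _))
        _ ≤ Real.exp (-x / c m) * (C + 1) := by
            exact mul_le_mul_of_nonneg_left (by linarith) (le_of_lt (Real.exp_pos _))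
        _ < (ε / (C + 1)) * (C + 1) := by
            exact mul_lt_mul_of_pos_right hElt (by linarith)
        _ = ε := by field_simp
    · simp only [if_neg h, abs_zero]
      exact hε
  · -- uniform approximation on bounded sets
    intro R hR ε hε
    set K : ℝ := (3 * R + 4) * C + 1 with hK
    refine ⟨max ⌈R⌉₊ ⌈K / ε⌉₊, ?_⟩
    intro m hm n hn x hx y hyR
    have hx0 : (0:ℝ) ≤ x := hx.1
    have hxR : x ≤ R := hx.2
    have hxIci : x ∈ Set.Ici (0:ℝ) := hx0
    have hyn : y ≤ n := by
      have h1 : (y:ℝ) ≤ (n:ℝ) := by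
        calc (y:ℝ) ≤ R := hyR
          _ ≤ (⌈R⌉₊ : ℝ) := Nat.le_ceil R
          _ ≤ ((max ⌈R⌉₊ ⌈K / ε⌉₊ : ℕ) : ℝ) := Nat.cast_le.mpr (le_max_left _ _)
          _ ≤ (n:ℝ) := Nat.cast_le.mpr hn
      exact_mod_cast h1
    simp only [if_pos hyn]
    have hcm : K / ε < c m := by
      calc K / ε ≤ (⌈K / ε⌉₊ : ℝ) := Nat.le_ceil _
        _ ≤ ((max ⌈R⌉₊ ⌈K / ε⌉₊ : ℕ) : ℝ) := Nat.cast_le.mpr (le_max_right _ _)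
        _ ≤ (m:ℝ) := Nat.cast_le.mpr hm
        _ < c m := by simp [hc]
    have hKpos : 0 < K := by nlinarith
    have hKc : K / c m < ε := by
      rw [div_lt_iff₀ (hcpos m)]
      have h1 : K / ε < c m := hcm
      rw [div_lt_iff₀ hε] at h1
      linarith
    set E : ℝ := Real.exp (-x / c m) with hE
    have hE0 : 0 < E := Real.exp_pos _
    have hE1 : E ≤ 1 := hEle m x hx0
    have hE2 : 1 - E ≤ x / c m := by
      have h := Real.add_one_le_exp (-x / c m)
      rw [neg_div] at h
      rw [hE, neg_div]
      linarith
    have hE3 : 1 - E ≤ R / c m := by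
      have h : x / c m ≤ R / c m := by gcongr
      linarith
    -- key: |E * a - a| ≤ C * (1 - E) for |a| ≤ C
    have hkey : ∀ a : ℝ, |a| ≤ C → |E * a - a| ≤ C * (1 - E) := by
      intro a ha
      have : E * a - a = (E - 1) * a := by ring
      rw [this, abs_mul, abs_of_nonpos (by linarith : E - 1 ≤ 0), neg_sub]
      calc (1 - E) * |a| ≤ (1 - E) * C :=
            mul_le_mul_of_nonneg_left ha (by linarith)
        _ = C * (1 - E) := mul_comm _ _
    have hd1 : |E * f x y - f x y| ≤ C * (R / c m) := by
      refine le_trans (hkey _ (hbf x hxIci y)) ?_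
      exact mul_le_mul_of_nonneg_left hE3 hC0
    have hd2 : |E * (f₁ x y - f x y / c m) - f₁ x y| ≤ C * (R / c m) + C / c m := by
      have heq : E * (f₁ x y - f x y / c m) - f₁ x y
          = (E * f₁ x y - f₁ x y) - E * (f x y / c m) := by ring
      rw [heq]
      refine le_trans (abs_sub _ _) ?_
      have h1 : |E * f₁ x y - f₁ x y| ≤ C * (R / c m) :=
        le_trans (hkey _ (hbf1 x hxIci y)) (mul_le_mul_of_nonneg_left hE3 hC0)
      have h2 : |E * (f x y / c m)| ≤ C / c m := by
        refine le_trans (hEmul m x hx0 _) ?_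
        rw [abs_div, abs_of_pos (hcpos m)]
        gcongr
        exact hbf x hxIci y
      linarith
    have hd3 : |E * (f₁₁ x y - 2 * f₁ x y / c m + f x y / (c m)^2) - f₁₁ x y|
        ≤ C * (R / c m) + 2 * C / c m + C / c m := by
      have heq : E * (f₁₁ x y - 2 * f₁ x y / c m + f x y / (c m)^2) - f₁₁ x y
          = (E * f₁₁ x y - f₁₁ x y) - E * (2 * f₁ x y / c m) + E * (f x y / (c m)^2) := by ring
      rw [heq]
      refine le_trans (abs_add_le _ _) ?_
      have h1 : |E * f₁₁ x y - f₁₁ x y - E * (2 * f₁ x y / c m)|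
          ≤ C * (R / c m) + 2 * C / c m := by
        refine le_trans (abs_sub _ _) ?_
        have ha : |E * f₁₁ x y - f₁₁ x y| ≤ C * (R / c m) :=
          le_trans (hkey _ (hbf11 x hxIci y)) (mul_le_mul_of_nonneg_left hE3 hC0)
        have hb : |E * (2 * f₁ x y / c m)| ≤ 2 * C / c m := by
          refine le_trans (hEmul m x hx0 _) ?_
          rw [abs_div, abs_of_pos (hcpos m), abs_mul, abs_two]
          gcongr
          exact hbf1 x hxIci y
        linarith
      have h2 : |E * (f x y / (c m)^2)| ≤ C / c m := by
        refine le_trans (hEmul m x hx0 _) ?_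
        rw [abs_div, abs_of_pos (by positivity : (0:ℝ) < (c m)^2)]
        have hcc : c m ≤ (c m)^2 := by nlinarith [hc1 m]
        calc |f x y| / (c m)^2 ≤ C / (c m)^2 := by
              gcongr
              exact hbf x hxIci y
          _ ≤ C / c m := by gcongr
      linarith
    have htotal : C * (R / c m) + (C * (R / c m) + C / c m)
        + (C * (R / c m) + 2 * C / c m + C / c m) < ε := by
      have hsum_eq : C * (R / c m) + (C * (R / c m) + C / c m)
          + (C * (R / c m) + 2 * C / c m + C / c m) = ((3 * R + 4) * C) / c m := by
        field_simp
        ring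
      rw [hsum_eq]
      rw [div_lt_iff₀ (hcpos m)]
      rw [div_lt_iff₀ (hcpos m)] at hKc
      rw [hK] at hKc
      linarith
    linarith [hd1, hd2, hd3, htotal]
end

section
/- Let b > 0, r > 0. Let m : ℕ → [0,∞) be such that y ↦ m(y)·y is non-decreasing on ℕ and R₂ := sup_{y ∈ ℕ} m(y)·y satisfies 0 < R₂ < ∞. Let (p'_ξ)_{ξ ∈ {-1}∪ℕ} be a probability mass function with S := Σ_{ξ=0}^∞ ξ p'_ξ < ∞ and R₁ := −p'_{-1} + S < 0. Define γ(x,y) = r·y + x·m(y)·y for (x,y) ∈ [0,∞) × ℕ, and let sgn(t) equal 1, 0, −1 according to t > 0, t = 0, t < 0. Then there exist θ > 0 and λ > 0 (for example θ = b / (2 R₂ (p'_{-1} + S)) and λ = min(b/2, −r R₁)) such that for all x, x̃ ∈ [0,∞) and all y, ỹ ∈ ℕ: −b·|x − x̃| − θ·p'_{-1}·(γ(x,y) − γ(x̃,ỹ))·sgn(y − ỹ) + θ·S·|γ(x,y) − γ(x̃,ỹ)| ≤ −λ·( |x − x̃| + θ·|y − ỹ| ). -/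
/-- Key one-sided estimate: the case `y' ≤ y`. -/
lemma stmt9_aux (b r : ℝ) (hb : 0 < b) (hr : 0 < r)
    (m : ℕ → ℝ) (hm0 : ∀ y, 0 ≤ m y)
    (hmono : ∀ y₁ y₂ : ℕ, y₁ ≤ y₂ → m y₁ * (y₁:ℝ) ≤ m y₂ * (y₂:ℝ))
    (R₂ : ℝ) (hR₂pos : 0 < R₂) (hub : ∀ y : ℕ, m y * (y:ℝ) ≤ R₂)
    (p1 S θ lam : ℝ) (hp1 : 0 ≤ p1) (hS0 : 0 ≤ S) (hSp : S < p1)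
    (hθ : 0 < θ) (hθle : θ * (p1 + S) * R₂ ≤ b / 2)
    (hlam1 : lam ≤ b / 2) (hlam2 : lam ≤ r * (p1 - S))
    (x : ℝ) (hx : 0 ≤ x) (x' : ℝ) (hx' : 0 ≤ x') (y y' : ℕ) (hyy : y' ≤ y) :
      -b * |x - x'|
        - θ * p1 * ((r * (y:ℝ) + x * m y * (y:ℝ)) - (r * (y':ℝ) + x' * m y' * (y':ℝ)))
            * Real.sign ((y:ℝ) - (y':ℝ))
        + θ * S * |(r * (y:ℝ) + x * m y * (y:ℝ)) - (r * (y':ℝ) + x' * m y' * (y':ℝ))|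
      ≤ -lam * (|x - x'| + θ * |(y:ℝ) - (y':ℝ)|) := by
  have hyyR : ((y':ℝ)) ≤ (y:ℝ) := by exact_mod_cast hyy
  set G := r * (y:ℝ) + x * m y * (y:ℝ) with hG
  set G' := r * (y':ℝ) + x' * m y' * (y':ℝ) with hG'
  set A := r * ((y:ℝ) - (y':ℝ)) + x * (m y * (y:ℝ) - m y' * (y':ℝ)) with hAdef
  set B := (x - x') * (m y' * (y':ℝ)) with hBdef
  have hGG : G - G' = A + B := by rw [hG, hG', hAdef, hBdef]; ring
  have hmm : m y' * (y':ℝ) ≤ m y * (y:ℝ) := hmono y' y hyy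
  have hm'0 : 0 ≤ m y' * (y':ℝ) := mul_nonneg (hm0 y') (Nat.cast_nonneg y')
  have hA0 : 0 ≤ A := by
    have h1 : 0 ≤ x * (m y * (y:ℝ) - m y' * (y':ℝ)) := mul_nonneg hx (by linarith)
    have h2 : 0 ≤ r * ((y:ℝ) - (y':ℝ)) := mul_nonneg hr.le (by linarith)
    rw [hAdef]; linarith
  have hAge : r * ((y:ℝ) - (y':ℝ)) ≤ A := by
    have h1 : 0 ≤ x * (m y * (y:ℝ) - m y' * (y':ℝ)) := mul_nonneg hx (by linarith)
    rw [hAdef]; linarith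
  have hBabs : |B| ≤ R₂ * |x - x'| := by
    rw [hBdef, abs_mul, abs_of_nonneg hm'0, mul_comm]
    exact mul_le_mul_of_nonneg_right (hub y') (abs_nonneg _)
  have habsy : |(y:ℝ) - (y':ℝ)| = (y:ℝ) - (y':ℝ) := abs_of_nonneg (by linarith)
  -- middle term bound
  have hM : -θ * p1 * (G - G') * Real.sign ((y:ℝ) - (y':ℝ)) ≤ θ * p1 * (-A + |B|) := by
    rcases eq_or_lt_of_le hyyR with heq | hlt
    · have hz : (y:ℝ) - (y':ℝ) = 0 := by linarith
      have hAz : A = 0 := by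
        have : (y:ℝ) = (y':ℝ) := by linarith
        have hyy' : y = y' := by exact_mod_cast this
        rw [hAdef, hyy']; ring
      rw [hz, Real.sign_zero, mul_zero, hAz]
      have h0 : 0 ≤ θ * p1 * (-0 + |B|) := by
        have := abs_nonneg B
        positivity
      linarith
    · rw [Real.sign_of_pos (by linarith), mul_one, hGG]
      have h1 : -A + -B ≤ -A + |B| := by linarith [neg_le_abs B]
      have h2 := mul_le_mul_of_nonneg_left h1 (mul_nonneg hθ.le hp1)
      linarith
  have hDabs : |G - G'| ≤ A + |B| := by
    rw [hGG]
    calc |A + B| ≤ |A| + |B| := abs_add_le _ _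
      _ = A + |B| := by rw [abs_of_nonneg hA0]
  -- combine
  have hSD : θ * S * |G - G'| ≤ θ * S * A + θ * S * |B| := by
    have h2 := mul_le_mul_of_nonneg_left hDabs (mul_nonneg hθ.le hS0)
    linarith
  have hAb : θ * S * A - θ * p1 * A ≤ θ * (S - p1) * (r * ((y:ℝ) - (y':ℝ))) := by
    have h1 : θ * (S - p1) ≤ 0 := mul_nonpos_of_nonneg_of_nonpos hθ.le (by linarith)
    have h2 := mul_le_mul_of_nonpos_left hAge h1
    linarith
  have hBb : θ * p1 * |B| + θ * S * |B| ≤ (b / 2) * |x - x'| := by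
    have h1 : 0 ≤ θ * (p1 + S) := mul_nonneg hθ.le (by linarith)
    have h2 : θ * (p1 + S) * |B| ≤ θ * (p1 + S) * (R₂ * |x - x'|) :=
      mul_le_mul_of_nonneg_left hBabs h1
    have h3 : θ * (p1 + S) * R₂ * |x - x'| ≤ (b / 2) * |x - x'| :=
      mul_le_mul_of_nonneg_right hθle (abs_nonneg _)
    linarith
  have hlamy : lam * (θ * ((y:ℝ) - (y':ℝ))) ≤ r * (p1 - S) * (θ * ((y:ℝ) - (y':ℝ))) :=
    mul_le_mul_of_nonneg_right hlam2 (mul_nonneg hθ.le (by linarith))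
  have hΔ : 0 ≤ |x - x'| := abs_nonneg (x - x')
  have hlamΔ : lam * |x - x'| ≤ (b / 2) * |x - x'| := mul_le_mul_of_nonneg_right hlam1 hΔ
  rw [habsy]
  linarith

/-- Exponential-contraction inequality from Theorem 4.9 of the paper: with
`γ(x,y) = r·y + x·m(y)·y`, under Conditions 4.5–4.6 there exist `θ > 0` and `λ > 0`
such that the coupling-generator bound is at most `−λ(|x − x̃| + θ|y − ỹ|)`. -/
theorem stmt9 (b r : ℝ) (hb : 0 < b) (hr : 0 < r)
    (m : ℕ → ℝ) (hm0 : ∀ y, 0 ≤ m y)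
    (hmono : ∀ y₁ y₂ : ℕ, y₁ ≤ y₂ → m y₁ * (y₁:ℝ) ≤ m y₂ * (y₂:ℝ))
    (R₂ : ℝ) (hR₂pos : 0 < R₂)
    (hR₂ : IsLUB (Set.range fun y : ℕ => m y * (y:ℝ)) R₂)
    (p' : ℤ → ℝ) (hp'0 : ∀ ξ, 0 ≤ p' ξ) (hp'neg : ∀ ξ : ℤ, ξ < -1 → p' ξ = 0)
    (hp'sum : HasSum p' 1)
    (S : ℝ) (hS : HasSum (fun ξ : ℕ => (ξ:ℝ) * p' (ξ:ℤ)) S)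
    (R₁ : ℝ) (hR₁def : R₁ = -p' (-1) + S) (hR₁ : R₁ < 0) :
    ∃ θ > (0:ℝ), ∃ lam > (0:ℝ), ∀ x ≥ (0:ℝ), ∀ x' ≥ (0:ℝ), ∀ y y' : ℕ,
      -b * |x - x'|
        - θ * p' (-1) * ((r * (y:ℝ) + x * m y * (y:ℝ)) - (r * (y':ℝ) + x' * m y' * (y':ℝ)))
            * Real.sign ((y:ℝ) - (y':ℝ))
        + θ * S * |(r * (y:ℝ) + x * m y * (y:ℝ)) - (r * (y':ℝ) + x' * m y' * (y':ℝ))|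
      ≤ -lam * (|x - x'| + θ * |(y:ℝ) - (y':ℝ)|) := by
  set p1 := p' (-1) with hp1def
  have hp1 : 0 ≤ p1 := hp'0 _
  have hS0 : 0 ≤ S := hS.nonneg fun ξ => mul_nonneg (Nat.cast_nonneg ξ) (hp'0 _)
  have hSp : S < p1 := by rw [hR₁def] at hR₁; linarith
  have hp1S : 0 < p1 + S := by linarith
  have hub : ∀ y : ℕ, m y * (y:ℝ) ≤ R₂ := fun y => hR₂.1 ⟨y, rfl⟩
  refine ⟨b / (2 * R₂ * (p1 + S)), by positivity, min (b / 2) (r * (p1 - S)),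
    lt_min (by positivity) (by nlinarith), ?_⟩
  set θ := b / (2 * R₂ * (p1 + S)) with hθdef
  set lam := min (b / 2) (r * (p1 - S)) with hlamdef
  have hθ : 0 < θ := by rw [hθdef]; positivity
  have hθle : θ * (p1 + S) * R₂ ≤ b / 2 := by
    rw [hθdef]
    rw [div_mul_eq_mul_div, div_mul_eq_mul_div, div_le_div_iff₀ (by positivity) (by norm_num)]
    ring_nf
    nlinarith
  have hlam1 : lam ≤ b / 2 := min_le_left _ _
  have hlam2 : lam ≤ r * (p1 - S) := min_le_right _ _
  intro x hx x' hx' y y'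
  rcases le_total y' y with hyy | hyy
  · exact stmt9_aux b r hb hr m hm0 hmono R₂ hR₂pos hub p1 S θ lam hp1 hS0 hSp hθ hθle
      hlam1 hlam2 x hx x' hx' y y' hyy
  · have key := stmt9_aux b r hb hr m hm0 hmono R₂ hR₂pos hub p1 S θ lam hp1 hS0 hSp hθ hθle
      hlam1 hlam2 x' hx' x hx y' y hyy
    have e1 : |x - x'| = |x' - x| := abs_sub_comm _ _
    have e2 : |(y:ℝ) - (y':ℝ)| = |(y':ℝ) - (y:ℝ)| := abs_sub_comm _ _
    have e3 : |(r * (y:ℝ) + x * m y * (y:ℝ)) - (r * (y':ℝ) + x' * m y' * (y':ℝ))|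
        = |(r * (y':ℝ) + x' * m y' * (y':ℝ)) - (r * (y:ℝ) + x * m y * (y:ℝ))| :=
      abs_sub_comm _ _
    have e4 : -θ * p1 * ((r * (y:ℝ) + x * m y * (y:ℝ)) - (r * (y':ℝ) + x' * m y' * (y':ℝ)))
            * Real.sign ((y:ℝ) - (y':ℝ))
        = -θ * p1 * ((r * (y':ℝ) + x' * m y' * (y':ℝ)) - (r * (y:ℝ) + x * m y * (y:ℝ)))
            * Real.sign ((y':ℝ) - (y:ℝ)) := by
      rw [show ((y:ℝ) - (y':ℝ)) = -((y':ℝ) - (y:ℝ)) by ring, Real.sign_neg]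
      ring
    rw [e1, e2, e3]
    linarith [key, e4.ge, e4.le]
end

section
/- Let b > 0, r > 0, let m : ℕ → [0,∞) be such that y ↦ m(y)·y is non-decreasing on ℕ with R₂ := sup_{y ∈ ℕ} m(y)·y < ∞, and let (p'_ξ)_{ξ ∈ {-1}∪ℕ} be a probability mass function with S := Σ_{ξ=0}^∞ ξ p'_ξ < ∞; set R₁ := −p'_{-1} + S and R̄ := p'_{-1} + S. Define γ(x,y) = r·y + x·m(y)·y, and let sgn(t) equal 1, 0, −1 according to t > 0, t = 0, t < 0. Then for every θ > 0, all x ≥ x̃ ≥ 0 and all y, ỹ ∈ ℕ: −b·(x − x̃) − θ·p'_{-1}·(γ(x,y) − γ(x̃,ỹ))·sgn(y − ỹ) + θ·S·|γ(x,y) − γ(x̃,ỹ)| ≤ −(b − θ·R̄·R₂)·(x − x̃) + θ·r·R₁·|y − ỹ| + θ·R₁·x̃·|m(y)·y − m(ỹ)·ỹ|. -/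
/-- Intermediate estimate from the proof of Theorem 4.9 of the paper (case `x ≥ x̃`):
with `γ(x,y) = r·y + x·m(y)·y`, `R̄ = p'_{-1} + S` and `R₁ = −p'_{-1} + S`, for every
`θ > 0` the coupling-generator expression is bounded by
`−(b − θ·R̄·R₂)(x − x̃) + θrR₁|y − ỹ| + θR₁·x̃·|m(y)y − m(ỹ)ỹ|`. -/
theorem stmt10 (b r : ℝ) (hb : 0 < b) (hr : 0 < r)
    (m : ℕ → ℝ) (hm0 : ∀ y, 0 ≤ m y)
    (hmono : ∀ y₁ y₂ : ℕ, y₁ ≤ y₂ → m y₁ * (y₁:ℝ) ≤ m y₂ * (y₂:ℝ))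
    (R₂ : ℝ) (hR₂ : IsLUB (Set.range fun y : ℕ => m y * (y:ℝ)) R₂)
    (p' : ℤ → ℝ) (hp'0 : ∀ ξ, 0 ≤ p' ξ) (hp'neg : ∀ ξ : ℤ, ξ < -1 → p' ξ = 0)
    (hp'sum : HasSum p' 1)
    (S : ℝ) (hS : HasSum (fun ξ : ℕ => (ξ:ℝ) * p' (ξ:ℤ)) S)
    (R₁ Rbar : ℝ) (hR₁def : R₁ = -p' (-1) + S) (hRbardef : Rbar = p' (-1) + S) :
    ∀ θ > (0:ℝ), ∀ x' ≥ (0:ℝ), ∀ x, x' ≤ x → ∀ y y' : ℕ,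
      -b * (x - x')
        - θ * p' (-1) * ((r * (y:ℝ) + x * m y * (y:ℝ)) - (r * (y':ℝ) + x' * m y' * (y':ℝ)))
            * Real.sign ((y:ℝ) - (y':ℝ))
        + θ * S * |(r * (y:ℝ) + x * m y * (y:ℝ)) - (r * (y':ℝ) + x' * m y' * (y':ℝ))|
      ≤ -(b - θ * Rbar * R₂) * (x - x') + θ * r * R₁ * |(y:ℝ) - (y':ℝ)|
          + θ * R₁ * x' * |m y * (y:ℝ) - m y' * (y':ℝ)| := by
  subst hR₁def hRbardef
  intro θ hθ x' hx' x hx y y'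
  have hp1 : 0 ≤ p' (-1) := hp'0 _
  have hS0 : 0 ≤ S := hS.nonneg fun ξ => mul_nonneg (Nat.cast_nonneg ξ) (hp'0 _)
  set Y : ℝ := (y:ℝ) - (y':ℝ) with hY
  set D : ℝ := m y * (y:ℝ) - m y' * (y':ℝ) with hDdef
  set s : ℝ := Real.sign Y with hsdef
  set M : ℝ := m y * (y:ℝ) with hMdef
  have hM0 : 0 ≤ M := mul_nonneg (hm0 y) (Nat.cast_nonneg y)
  have hMR : M ≤ R₂ := hR₂.1 ⟨y, rfl⟩
  have hg : 0 ≤ x - x' := sub_nonneg.2 hx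
  have hYs : Y * s = |Y| := by
    rcases lt_trichotomy Y 0 with h | h | h
    · rw [hsdef, Real.sign_of_neg h, abs_of_neg h]; ring
    · rw [hsdef, h, Real.sign_zero, abs_zero]; ring
    · rw [hsdef, Real.sign_of_pos h, abs_of_pos h]; ring
  have hsabs : |s| ≤ 1 := by
    rcases lt_trichotomy Y 0 with h | h | h
    · rw [hsdef, Real.sign_of_neg h]; norm_num
    · rw [hsdef, h, Real.sign_zero]; norm_num
    · rw [hsdef, Real.sign_of_pos h]; norm_num
  have hDs : D * s = |D| := by
    rcases lt_trichotomy y y' with h | h | h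
    · have hY' : Y < 0 := by
        rw [hY]; simp only [sub_neg]; exact_mod_cast h
      have hD' : D ≤ 0 := sub_nonpos.2 (hmono y y' h.le)
      rw [hsdef, Real.sign_of_neg hY', abs_of_nonpos hD']; ring
    · subst h
      have : D = 0 := by rw [hDdef]; ring
      rw [this, abs_zero]; ring
    · have hY' : 0 < Y := by
        rw [hY]; simp only [sub_pos]; exact_mod_cast h
      have hD' : 0 ≤ D := sub_nonneg.2 (hmono y' y h.le)
      rw [hsdef, Real.sign_of_pos hY', abs_of_nonneg hD']; ring
  set G : ℝ := (r * (y:ℝ) + x * m y * (y:ℝ)) - (r * (y':ℝ) + x' * m y' * (y':ℝ)) with hGdef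
  have hG : G = r * Y + (x - x') * M + x' * D := by rw [hGdef, hY, hMdef, hDdef]; ring
  -- lower bound on G * s
  have hgMs : -((x - x') * R₂) ≤ (x - x') * M * s := by
    have h1 : |(x - x') * M * s| ≤ (x - x') * M := by
      rw [abs_mul, abs_of_nonneg (mul_nonneg hg hM0)]
      nlinarith [mul_nonneg hg hM0, abs_nonneg s]
    have h2 := neg_abs_le ((x - x') * M * s)
    nlinarith [mul_le_mul_of_nonneg_left hMR hg]
  have hGs : r * |Y| - (x - x') * R₂ + x' * |D| ≤ G * s := by
    have : G * s = r * (Y * s) + (x - x') * M * s + x' * (D * s) := by rw [hG]; ring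
    rw [this, hYs, hDs]
    nlinarith [hgMs]
  -- upper bound on |G|
  have hGabs : |G| ≤ r * |Y| + (x - x') * R₂ + x' * |D| := by
    rw [hG]
    calc |r * Y + (x - x') * M + x' * D| ≤ |r * Y + (x - x') * M| + |x' * D| := abs_add_le _ _
      _ ≤ |r * Y| + |(x - x') * M| + |x' * D| := by linarith [abs_add_le (r * Y) ((x - x') * M)]
      _ = r * |Y| + (x - x') * M + x' * |D| := by
          rw [abs_mul r Y, abs_mul (x - x') M, abs_mul x' D, abs_of_pos hr,
            abs_of_nonneg hg, abs_of_nonneg hM0, abs_of_nonneg hx']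
      _ ≤ r * |Y| + (x - x') * R₂ + x' * |D| := by nlinarith [mul_le_mul_of_nonneg_left hMR hg]
  have h1 : θ * p' (-1) * (r * |Y| - (x - x') * R₂ + x' * |D|) ≤ θ * p' (-1) * (G * s) :=
    mul_le_mul_of_nonneg_left hGs (by positivity)
  have h2 : θ * S * |G| ≤ θ * S * (r * |Y| + (x - x') * R₂ + x' * |D|) :=
    mul_le_mul_of_nonneg_left hGabs (by positivity)
  linarith [h1, h2]
end
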